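/- If φ is the characteristic function of a random variable X in L^r with r ∈ (k+1, k+2), whose first k moments match those of a standard Gaussian, then as λ → 0, φ(λ) e^{λ²/2} = 1 + c_{k+1}(iλ)^{k+1}/(k+1)! + O(|λ|^r), where c_{k+1} = μ_{k+1} - γ_{k+1} with μ_{k+1} = E[X^{k+1}] and γ_{k+1} the (k+1)-th moment of the standard Gaussian. -/

import Mathlib

open Complex MeasureTheory ProbabilityTheory Filter Asymptotics Finset

noncomputable def expRem (n : ℕ) (x : ℝ) : ℂ :=
  Complex.exp (Complex.I * x) - ∑ j ∈ Finset.range (n + 1), (Complex.I * x) ^ j / j.factorial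

lemma expRem_zero_arg (n : ℕ) : expRem n 0 = 0 := by
  simp [expRem, Finset.sum_range_succ']

lemma norm_expRem_neg (n : ℕ) (x : ℝ) : ‖expRem n (-x)‖ = ‖expRem n x‖ := by
  have h : expRem n (-x) = (starRingEnd ℂ) (expRem n x) := by
    simp only [expRem, map_sub, map_sum, map_div₀, map_pow, map_mul, Complex.conj_I,
      Complex.conj_ofReal, map_natCast, ← Complex.exp_conj]
    push_cast
    ring_nf
  rw [h, RCLike.norm_conj]

lemma hasDerivAt_sum_exp (n : ℕ) (x : ℝ) :
    HasDerivAt (fun y : ℝ => ∑ j ∈ Finset.range (n + 1), (Complex.I * y) ^ j / j.factorial)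
      (Complex.I * ∑ j ∈ Finset.range n, (Complex.I * x) ^ j / j.factorial) x := by
  induction n with
  | zero =>
    have h1 : (fun y : ℝ => ∑ j ∈ Finset.range (0 + 1), (Complex.I * y) ^ j / (j.factorial : ℂ))
        = fun _ => 1 := by funext y; simp
    rw [h1]
    simpa using hasDerivAt_const x (1:ℂ)
  | succ n ih =>
    have hc : HasDerivAt (fun z : ℂ => (Complex.I * z) ^ (n + 1) / ((n + 1).factorial : ℂ))
        (((n + 1 : ℕ) : ℂ) * (Complex.I * x) ^ n * Complex.I / ((n + 1).factorial : ℂ)) (x : ℂ) := by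
      have h1 : HasDerivAt (fun z : ℂ => Complex.I * z) Complex.I (x : ℂ) := by
        simpa using HasDerivAt.const_mul Complex.I (hasDerivAt_id (x : ℂ))
      have h2 := (h1.pow (n + 1)).div_const ((n + 1).factorial : ℂ)
      simpa using h2
    have hpow := hc.comp_ofReal
    have := ih.add hpow
    have heq : (fun y : ℝ => (∑ j ∈ Finset.range (n + 1), (Complex.I * y) ^ j / j.factorial)
        + (Complex.I * y) ^ (n + 1) / (n + 1).factorial)
        = fun y : ℝ => ∑ j ∈ Finset.range (n + 2), (Complex.I * y) ^ j / j.factorial := by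
      funext y
      exact (Finset.sum_range_succ (fun j => (Complex.I * (y:ℂ)) ^ j / (j.factorial : ℂ)) (n+1)).symm
    simp only [Pi.add_def] at this
    rw [heq] at this
    refine this.congr_deriv ?_
    rw [Finset.sum_range_succ]
    have h1 : ((n + 1).factorial : ℂ) = (n + 1) * n.factorial := by
      push_cast [Nat.factorial_succ]; ring
    have h2 : (n.factorial : ℂ) ≠ 0 := by exact_mod_cast Nat.factorial_ne_zero n
    have h3 : ((n : ℂ) + 1) ≠ 0 := Nat.cast_add_one_ne_zero n
    field_simp [h1]
    simp only [Nat.add_comm 1 n, Nat.factorial_succ]; push_cast; ring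

lemma hasDerivAt_expRem (n : ℕ) (x : ℝ) :
    HasDerivAt (expRem (n + 1)) (Complex.I * expRem n x) x := by
  have h0 : HasDerivAt (fun y : ℝ => (y : ℂ)) ((1:ℝ):ℂ) x :=
    HasDerivAt.ofReal_comp (hasDerivAt_id x)
  have hI : HasDerivAt (fun y : ℝ => Complex.I * (y : ℂ)) Complex.I x := by
    have := HasDerivAt.const_mul Complex.I h0
    simpa using this
  have hexp : HasDerivAt (fun y : ℝ => Complex.exp (Complex.I * y))
      (Complex.exp (Complex.I * x) * Complex.I) x := hI.cexp
  have := hexp.sub (hasDerivAt_sum_exp (n + 1) x)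
  refine this.congr_deriv ?_
  simp only [expRem]
  ring

lemma continuous_expRem (n : ℕ) : Continuous (expRem n) := by
  unfold expRem
  refine (Complex.continuous_exp.comp (continuous_const.mul Complex.continuous_ofReal)).sub ?_
  exact continuous_finset_sum _ fun j _ =>
    ((continuous_const.mul Complex.continuous_ofReal).pow j).div_const _

lemma expRem_eq_integral (n : ℕ) (x : ℝ) :
    expRem (n + 1) x = ∫ t in (0:ℝ)..x, Complex.I * expRem n t := by
  have h := intervalIntegral.integral_eq_sub_of_hasDerivAt
    (f := expRem (n + 1)) (f' := fun t => Complex.I * expRem n t)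
    (fun t _ => hasDerivAt_expRem n t)
    ((continuous_const.mul (continuous_expRem n)).intervalIntegrable 0 x)
  rw [h, expRem_zero_arg, sub_zero]

lemma norm_expRem_zero_le_two (x : ℝ) : ‖expRem 0 x‖ ≤ 2 := by
  have h : expRem 0 x = Complex.exp (Complex.I * x) - 1 := by simp [expRem]
  rw [h]
  calc ‖Complex.exp (Complex.I * x) - 1‖ ≤ ‖Complex.exp (Complex.I * x)‖ + ‖(1:ℂ)‖ :=
        norm_sub_le _ _
    _ ≤ 2 := by
        simp [Complex.norm_exp]
        norm_num

lemma norm_expRem_zero_le (x : ℝ) : ‖expRem 0 x‖ ≤ |x| := by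
  have hder : ∀ t : ℝ, HasDerivAt (expRem 0) (Complex.I * Complex.exp (Complex.I * t)) t := by
    intro t
    have h0 : HasDerivAt (fun y : ℝ => (y : ℂ)) ((1:ℝ):ℂ) t :=
      HasDerivAt.ofReal_comp (hasDerivAt_id t)
    have hI : HasDerivAt (fun y : ℝ => Complex.I * (y : ℂ)) Complex.I t := by
      have := HasDerivAt.const_mul Complex.I h0
      simpa using this
    have hexp := hI.cexp
    have heq : expRem 0 = fun y : ℝ => Complex.exp (Complex.I * y) - 1 := by
      funext y; simp [expRem]
    rw [heq]
    simpa [mul_comm] using hexp.sub_const 1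
  have h := intervalIntegral.integral_eq_sub_of_hasDerivAt
    (f := expRem 0) (f' := fun t => Complex.I * Complex.exp (Complex.I * t))
    (fun t _ => hder t)
    ((continuous_const.mul
      (Complex.continuous_exp.comp (continuous_const.mul Complex.continuous_ofReal))).intervalIntegrable 0 x)
  rw [expRem_zero_arg, sub_zero] at h
  rw [← h]
  have := intervalIntegral.norm_integral_le_of_norm_le_const
    (C := 1) (f := fun t : ℝ => Complex.I * Complex.exp (Complex.I * t)) (a := (0:ℝ)) (b := x) ?_
  · simpa using this
  · intro t _
    simp [Complex.norm_exp]

lemma norm_expRem_le_two (n : ℕ) (x : ℝ) : ‖expRem n x‖ ≤ 2 * |x| ^ n / n.factorial := by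
  induction n generalizing x with
  | zero => simpa using norm_expRem_zero_le_two x
  | succ n ih =>
    have key : ∀ y : ℝ, 0 ≤ y → ‖expRem (n+1) y‖ ≤ 2 * |y| ^ (n+1) / (n+1).factorial := by
      intro y hy
      rw [expRem_eq_integral]
      have h1 : ‖∫ t in (0:ℝ)..y, Complex.I * expRem n t‖
          ≤ ∫ t in (0:ℝ)..y, ‖Complex.I * expRem n t‖ :=
        intervalIntegral.norm_integral_le_integral_norm hy
      have h2 : (∫ t in (0:ℝ)..y, ‖Complex.I * expRem n t‖)
          ≤ ∫ t in (0:ℝ)..y, 2 * t ^ n / n.factorial := by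
        apply intervalIntegral.integral_mono_on hy
        · exact ((continuous_const.mul (continuous_expRem n)).norm).intervalIntegrable 0 y
        · exact (Continuous.intervalIntegrable (by continuity) 0 y)
        · intro t ht
          have hn : ‖Complex.I * expRem n t‖ = ‖expRem n t‖ := by
            rw [norm_mul, Complex.norm_I, one_mul]
          rw [hn]
          calc ‖expRem n t‖ ≤ 2 * |t| ^ n / n.factorial := ih t
            _ = 2 * t ^ n / n.factorial := by rw [_root_.abs_of_nonneg ht.1]
      have h3 : (∫ t in (0:ℝ)..y, 2 * t ^ n / n.factorial)
          = 2 * y ^ (n+1) / (n+1).factorial := by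
        have heq : (fun t : ℝ => 2 * t ^ n / n.factorial)
            = fun t : ℝ => (2 / n.factorial) * t ^ n := by funext t; ring
        rw [heq, intervalIntegral.integral_const_mul, integral_pow]
        have hfac : ((n+1).factorial : ℝ) = (n+1) * n.factorial := by
          push_cast [Nat.factorial_succ]; ring
        have h4 : (n.factorial : ℝ) ≠ 0 := by exact_mod_cast Nat.factorial_ne_zero n
        have h5 : ((n:ℝ) + 1) ≠ 0 := by positivity
        rw [hfac, zero_pow (Nat.succ_ne_zero n), sub_zero]
        field_simp
      refine le_trans (le_trans h1 h2) ?_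
      rw [h3, _root_.abs_of_nonneg hy]
    rcases le_total 0 x with hx | hx
    · exact key x hx
    · have h := key (-x) (by linarith)
      rwa [norm_expRem_neg, abs_neg] at h

lemma norm_expRem_le_pow (n : ℕ) (x : ℝ) : ‖expRem n x‖ ≤ |x| ^ (n+1) / (n+1).factorial := by
  induction n generalizing x with
  | zero => simpa using norm_expRem_zero_le x
  | succ n ih =>
    have key : ∀ y : ℝ, 0 ≤ y → ‖expRem (n+1) y‖ ≤ |y| ^ (n+2) / (n+2).factorial := by
      intro y hy
      rw [expRem_eq_integral]
      have h1 : ‖∫ t in (0:ℝ)..y, Complex.I * expRem n t‖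
          ≤ ∫ t in (0:ℝ)..y, ‖Complex.I * expRem n t‖ :=
        intervalIntegral.norm_integral_le_integral_norm hy
      have h2 : (∫ t in (0:ℝ)..y, ‖Complex.I * expRem n t‖)
          ≤ ∫ t in (0:ℝ)..y, t ^ (n+1) / (n+1).factorial := by
        apply intervalIntegral.integral_mono_on hy
        · exact ((continuous_const.mul (continuous_expRem n)).norm).intervalIntegrable 0 y
        · exact (Continuous.intervalIntegrable (by continuity) 0 y)
        · intro t ht
          have hn : ‖Complex.I * expRem n t‖ = ‖expRem n t‖ := by
            rw [norm_mul, Complex.norm_I, one_mul]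
          rw [hn]
          calc ‖expRem n t‖ ≤ |t| ^ (n+1) / (n+1).factorial := ih t
            _ = t ^ (n+1) / (n+1).factorial := by rw [_root_.abs_of_nonneg ht.1]
      have h3 : (∫ t in (0:ℝ)..y, t ^ (n+1) / (n+1).factorial)
          = y ^ (n+2) / (n+2).factorial := by
        have heq : (fun t : ℝ => t ^ (n+1) / (n+1).factorial)
            = fun t : ℝ => (1 / (n+1).factorial) * t ^ (n+1) := by funext t; ring
        rw [heq, intervalIntegral.integral_const_mul, integral_pow]
        have hfac : ((n+2).factorial : ℝ) = (n+2) * (n+1).factorial := by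
          push_cast [Nat.factorial_succ]; ring
        have h4 : ((n+1).factorial : ℝ) ≠ 0 := by exact_mod_cast Nat.factorial_ne_zero (n+1)
        have h5 : ((n:ℝ) + 2) ≠ 0 := by positivity
        rw [hfac, zero_pow (Nat.succ_ne_zero (n+1)), sub_zero]
        field_simp
        ring_nf
        push_cast; ring
      refine le_trans (le_trans h1 h2) ?_
      rw [h3, _root_.abs_of_nonneg hy]
    rcases le_total 0 x with hx | hx
    · exact key x hx
    · have h := key (-x) (by linarith)
      rwa [norm_expRem_neg, abs_neg] at h

lemma norm_expRem_le_rpow (k : ℕ) (r : ℝ) (h1 : (k:ℝ) + 1 ≤ r) (h2 : r ≤ (k:ℝ) + 2) (x : ℝ) :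
    ‖expRem (k+1) x‖ ≤ 2 / (k+1).factorial * |x| ^ r := by
  have hr0 : 0 < r := lt_of_lt_of_le (by positivity) h1
  rcases eq_or_ne x 0 with rfl | hx
  · simp [expRem_zero_arg, Real.zero_rpow hr0.ne']
  have hxpos : 0 < |x| := abs_pos.mpr hx
  rcases le_total |x| 1 with hle | hge
  · have e1 : |x| ^ (k+2) ≤ |x| ^ r := by
      rw [← Real.rpow_natCast |x| (k+2)]
      apply Real.rpow_le_rpow_of_exponent_ge hxpos hle
      push_cast; linarith
    have e2 : ((k+1).factorial : ℝ) ≤ ((k+2).factorial : ℝ) := by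
      exact_mod_cast Nat.factorial_le (by omega)
    calc ‖expRem (k+1) x‖ ≤ |x| ^ (k+2) / (k+2).factorial := norm_expRem_le_pow (k+1) x
      _ ≤ |x| ^ r / (k+1).factorial := by
          apply div_le_div₀ (Real.rpow_nonneg (abs_nonneg x) r) e1 (by positivity) e2
      _ ≤ 2 / (k+1).factorial * |x| ^ r := by
          rw [div_mul_eq_mul_div, div_le_div_iff₀ (by positivity) (by positivity)]
          nlinarith [Real.rpow_nonneg (abs_nonneg x) r,
            (show (0:ℝ) < (k+1).factorial by positivity)]
  · have e1 : |x| ^ (k+1) ≤ |x| ^ r := by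
      rw [← Real.rpow_natCast |x| (k+1)]
      apply Real.rpow_le_rpow_of_exponent_le hge
      push_cast; linarith
    calc ‖expRem (k+1) x‖ ≤ 2 * |x| ^ (k+1) / (k+1).factorial := norm_expRem_le_two (k+1) x
      _ ≤ 2 / (k+1).factorial * |x| ^ r := by
          rw [div_mul_eq_mul_div]
          gcongr

lemma pow_le_one_add_rpow (y : ℝ) (j : ℕ) (r : ℝ) (hj : (j:ℝ) ≤ r) :
    |y| ^ j ≤ 1 + |y| ^ r := by
  rcases le_total |y| 1 with h | h
  · have : |y| ^ j ≤ 1 := pow_le_one₀ (abs_nonneg y) h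
    have hr : 0 ≤ |y| ^ r := Real.rpow_nonneg (abs_nonneg y) r
    linarith
  · have : |y| ^ j ≤ |y| ^ r := by
      rw [← Real.rpow_natCast |y| j]
      exact Real.rpow_le_rpow_of_exponent_le h hj
    linarith

lemma charFun_taylor_bound {α : Type*} [MeasurableSpace α] (ν : Measure α)
    [IsProbabilityMeasure ν] (Y : α → ℝ) (hmeas : AEMeasurable Y ν)
    (k : ℕ) (r : ℝ) (h1 : (k:ℝ) + 1 ≤ r) (h2 : r ≤ (k:ℝ) + 2)
    (hint : Integrable (fun a => |Y a| ^ r) ν) (lam : ℝ) :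
    ‖(∫ a, Complex.exp (Complex.I * lam * Y a) ∂ν)
        - ∑ j ∈ Finset.range (k + 2),
            ((∫ a, (Y a) ^ j ∂ν : ℝ) : ℂ) * (Complex.I * lam) ^ j / j.factorial‖
      ≤ 2 / (k+1).factorial * (∫ a, |Y a| ^ r ∂ν) * |lam| ^ r := by
  have hr0 : 0 < r := lt_of_lt_of_le (by positivity) h1
  have hpow_int : ∀ j, j ≤ k + 1 → Integrable (fun a => (Y a) ^ j) ν := by
    intro j hj
    refine Integrable.mono' ((integrable_const (1:ℝ)).add hint)
      ((hmeas.pow_const j).aestronglyMeasurable) ?_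
    filter_upwards with a
    simp only [Pi.add_apply, Real.norm_eq_abs, _root_.abs_pow]
    refine pow_le_one_add_rpow (Y a) j r ?_
    calc (j:ℝ) ≤ (k:ℝ) + 1 := by exact_mod_cast hj
      _ ≤ r := h1
  have hexp_int : Integrable (fun a => Complex.exp (Complex.I * lam * Y a)) ν := by
    have hm : AEMeasurable (fun a => Complex.I * lam * (Y a : ℂ)) ν :=
      (Complex.measurable_ofReal.comp_aemeasurable hmeas).const_mul _
    refine Integrable.mono' (integrable_const (1:ℝ))
      (Complex.measurable_exp.comp_aemeasurable hm).aestronglyMeasurable ?_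
    filter_upwards with a
    have hre : (Complex.I * lam * (Y a : ℂ)).re = 0 := by simp
    rw [Complex.norm_exp, hre, Real.exp_zero]
  have hterm_int : ∀ j ∈ Finset.range (k + 2),
      Integrable (fun a => ((Y a : ℂ)) ^ j * (Complex.I * lam) ^ j / j.factorial) ν := by
    intro j hj
    have hj' : j ≤ k + 1 := by
      have := Finset.mem_range.mp hj; omega
    have h := ((hpow_int j hj').ofReal (𝕜 := ℂ)).mul_const ((Complex.I * lam) ^ j / j.factorial)
    refine h.congr ?_
    filter_upwards with a
    show (((Y a ^ j : ℝ)) : ℂ) * ((Complex.I * lam) ^ j / j.factorial)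
      = ((Y a : ℂ)) ^ j * (Complex.I * lam) ^ j / j.factorial
    push_cast
    ring
  have hterms_int : Integrable
      (fun a => ∑ j ∈ Finset.range (k + 2),
        ((Y a : ℂ)) ^ j * (Complex.I * lam) ^ j / j.factorial) ν :=
    integrable_finset_sum _ hterm_int
  have h1a : ∀ a, expRem (k+1) (lam * Y a)
      = Complex.exp (Complex.I * lam * Y a)
        - ∑ j ∈ Finset.range (k + 2),
            ((Y a : ℂ)) ^ j * (Complex.I * lam) ^ j / j.factorial := by
    intro a
    simp only [expRem]
    have hkk : k + 1 + 1 = k + 2 := rfl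
    rw [hkk]
    push_cast
    congr 1
    · ring_nf
    · refine Finset.sum_congr rfl fun j _ => ?_
      ring
  have hG_int : Integrable (fun a => expRem (k+1) (lam * Y a)) ν := by
    refine (hexp_int.sub hterms_int).congr ?_
    filter_upwards with a
    rw [h1a a, Pi.sub_apply]
  have key_eq : (∫ a, Complex.exp (Complex.I * lam * Y a) ∂ν)
      - ∑ j ∈ Finset.range (k + 2),
          ((∫ a, (Y a) ^ j ∂ν : ℝ) : ℂ) * (Complex.I * lam) ^ j / j.factorial
      = ∫ a, expRem (k+1) (lam * Y a) ∂ν := by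
    have : ∫ a, expRem (k+1) (lam * Y a) ∂ν
        = (∫ a, Complex.exp (Complex.I * lam * Y a) ∂ν)
          - ∫ a, ∑ j ∈ Finset.range (k + 2),
              ((Y a : ℂ)) ^ j * (Complex.I * lam) ^ j / j.factorial ∂ν := by
      rw [← integral_sub hexp_int hterms_int]
      exact integral_congr_ae (Filter.Eventually.of_forall fun a => h1a a)
    rw [this, integral_finset_sum _ hterm_int]
    congr 1
    refine Finset.sum_congr rfl fun j hj => ?_
    have heq : (fun a => ((Y a : ℂ)) ^ j * (Complex.I * lam) ^ j / j.factorial)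
        = fun a => (((Y a ^ j : ℝ)) : ℂ) * ((Complex.I * lam) ^ j / j.factorial) := by
      funext a; push_cast; ring
    rw [heq, integral_mul_const]
    rw [show (∫ a, (((Y a ^ j : ℝ)) : ℂ) ∂ν) = ((∫ a, Y a ^ j ∂ν : ℝ) : ℂ) from integral_ofReal]
    ring
  rw [key_eq]
  have step1 : ‖∫ a, expRem (k+1) (lam * Y a) ∂ν‖
      ≤ ∫ a, ‖expRem (k+1) (lam * Y a)‖ ∂ν := norm_integral_le_integral_norm _
  have step2 : (∫ a, ‖expRem (k+1) (lam * Y a)‖ ∂ν)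
      ≤ ∫ a, 2 / (k+1).factorial * |lam| ^ r * |Y a| ^ r ∂ν := by
    refine integral_mono hG_int.norm ((hint.const_mul _)) ?_
    intro a
    calc ‖expRem (k+1) (lam * Y a)‖ ≤ 2 / (k+1).factorial * |lam * Y a| ^ r :=
          norm_expRem_le_rpow k r h1 h2 (lam * Y a)
      _ = 2 / (k+1).factorial * |lam| ^ r * |Y a| ^ r := by
          rw [abs_mul, Real.mul_rpow (abs_nonneg lam) (abs_nonneg (Y a))]
          ring
  refine le_trans (le_trans step1 step2) ?_
  rw [integral_const_mul]
  ring_nf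
  exact le_refl _

lemma gaussianReal_std_eq : gaussianReal 0 1
    = MeasureTheory.volume.withDensity
        (fun x => ((gaussianPDFReal 0 1 x).toNNReal : ENNReal)) := by
  rw [gaussianReal_of_var_ne_zero 0 one_ne_zero]
  rfl

lemma integral_gaussianReal_std {E : Type*} [NormedAddCommGroup E] [NormedSpace ℝ E]
    (g : ℝ → E) :
    ∫ x, g x ∂(gaussianReal 0 1) = ∫ x, gaussianPDFReal 0 1 x • g x := by
  rw [gaussianReal_std_eq,
    integral_withDensity_eq_integral_smul (measurable_gaussianPDFReal 0 1).real_toNNReal g]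
  congr 1
  funext x
  rw [NNReal.smul_def, Real.coe_toNNReal _ (gaussianPDFReal_nonneg 0 1 x)]

lemma gaussianPDFReal_std_eq (x : ℝ) :
    gaussianPDFReal 0 1 x = (Real.sqrt (2 * Real.pi))⁻¹ * Real.exp (-(x ^ 2) / 2) := by
  simp [gaussianPDFReal]

lemma charFun_gaussianReal_std (lam : ℝ) :
    ∫ x : ℝ, Complex.exp (Complex.I * lam * x) ∂(gaussianReal 0 1)
      = Complex.exp (-(((lam : ℂ)) ^ 2) / 2) := by
  rw [integral_gaussianReal_std]
  have hptw : ∀ x : ℝ, gaussianPDFReal 0 1 x • Complex.exp (Complex.I * lam * x)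
      = (Real.sqrt (2 * Real.pi))⁻¹ •
          (Complex.exp (Complex.I * lam * x) * Complex.exp (-(1/2 : ℂ) * x ^ 2)) := by
    intro x
    rw [gaussianPDFReal_std_eq, Complex.real_smul, Complex.real_smul]
    push_cast
    rw [show -(x:ℂ)^2/2 = -(1/2:ℂ)*(x:ℂ)^2 by ring]
    ring
  simp_rw [hptw]
  rw [integral_smul]
  have hfour := fourierIntegral_gaussian (b := (1/2 : ℂ)) (by norm_num) (lam : ℂ)
  rw [hfour]
  have h1 : ((Real.pi : ℂ) / (1/2)) = ((2 * Real.pi : ℝ) : ℂ) := by push_cast; ring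
  have h2 : ((2 * Real.pi : ℝ) : ℂ) ^ (1/2 : ℂ) = ((Real.sqrt (2 * Real.pi) : ℝ) : ℂ) := by
    rw [show (1/2 : ℂ) = ((1/2 : ℝ) : ℂ) by norm_num]
    rw [← Complex.ofReal_cpow (by positivity : (0:ℝ) ≤ 2 * Real.pi), Real.sqrt_eq_rpow]
  have h3 : -(lam : ℂ) ^ 2 / (4 * (1/2)) = -((lam : ℂ)) ^ 2 / 2 := by ring
  rw [h1, h2, h3]
  have h4 : ((Real.sqrt (2*Real.pi))⁻¹ : ℝ) * Real.sqrt (2*Real.pi) = 1 :=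
    inv_mul_cancel₀ (by positivity)
  rw [Complex.real_smul, ← mul_assoc, ← Complex.ofReal_mul, h4, Complex.ofReal_one, one_mul]

lemma gaussianReal_integrable_abs_rpow (r : ℝ) (hr : 0 ≤ r) (m : ℕ) (hm : r ≤ (m:ℝ)) :
    Integrable (fun x : ℝ => |x| ^ r) (gaussianReal 0 1) := by
  rw [gaussianReal_std_eq,
    integrable_withDensity_iff_integrable_smul (measurable_gaussianPDFReal 0 1).real_toNNReal]
  have hmaj : Integrable (fun x : ℝ =>
      (Real.sqrt (2 * Real.pi))⁻¹ * ((2 + x ^ (2*m)) * Real.exp (-(1/2) * x ^ 2))) := by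
    refine Integrable.const_mul ?_ _
    have h1 : Integrable (fun x : ℝ => 2 * Real.exp (-(1/2) * x ^ 2)) :=
      (integrable_exp_neg_mul_sq (by norm_num : (0:ℝ) < 1/2)).const_mul 2
    have h2 : Integrable (fun x : ℝ => x ^ (2*m) * Real.exp (-(1/2) * x ^ 2)) := by
      have h := integrable_rpow_mul_exp_neg_mul_sq (by norm_num : (0:ℝ) < 1/2)
        (s := ((2*m : ℕ) : ℝ))
        (lt_of_lt_of_le neg_one_lt_zero (Nat.cast_nonneg _))
      refine h.congr ?_
      filter_upwards with x
      rw [Real.rpow_natCast]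
    refine (h1.add h2).congr ?_
    filter_upwards with x
    simp only [Pi.add_apply]
    ring
  refine hmaj.mono' ?_ ?_
  · refine AEStronglyMeasurable.smul ?_ ?_
    · exact (measurable_gaussianPDFReal 0 1).real_toNNReal.coe_nnreal_real.aestronglyMeasurable
    · exact ((_root_.continuous_abs.rpow_const (fun x => Or.inr hr)).aestronglyMeasurable)
  · filter_upwards with x
    rw [NNReal.smul_def, Real.coe_toNNReal _ (gaussianPDFReal_nonneg 0 1 x), smul_eq_mul,
      Real.norm_eq_abs,
      _root_.abs_of_nonneg (mul_nonneg (gaussianPDFReal_nonneg 0 1 x)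
        (Real.rpow_nonneg (abs_nonneg x) r)), gaussianPDFReal_std_eq]
    have habs : |x| ^ r ≤ 2 + x ^ (2*m) := by
      rcases le_total |x| 1 with h | h
      · have : |x| ^ r ≤ 1 := Real.rpow_le_one (abs_nonneg x) h hr
        have h2 : 0 ≤ x ^ (2*m) := Even.pow_nonneg (even_two_mul m) x
        linarith
      · have h1 : |x| ^ r ≤ |x| ^ ((2*m : ℕ) : ℝ) := by
          apply Real.rpow_le_rpow_of_exponent_le h
          push_cast; linarith
        have h2 : |x| ^ ((2*m : ℕ) : ℝ) = x ^ (2*m) := by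
          rw [Real.rpow_natCast, ← _root_.abs_pow]
          exact _root_.abs_of_nonneg (Even.pow_nonneg (even_two_mul m) x)
        have h3 : (0:ℝ) ≤ x ^ (2*m) := Even.pow_nonneg (even_two_mul m) x
        linarith
    have hexp : Real.exp (-(x^2)/2) = Real.exp (-(1/2) * x^2) := by ring_nf
    have hppos : (0:ℝ) ≤ (Real.sqrt (2 * Real.pi))⁻¹ := by positivity
    calc (Real.sqrt (2 * Real.pi))⁻¹ * Real.exp (-(x^2)/2) * |x| ^ r
        = (Real.sqrt (2 * Real.pi))⁻¹ * (|x| ^ r * Real.exp (-(1/2) * x^2)) := by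
          rw [hexp]; ring
      _ ≤ (Real.sqrt (2 * Real.pi))⁻¹ * ((2 + x ^ (2*m)) * Real.exp (-(1/2) * x^2)) := by
          apply mul_le_mul_of_nonneg_left ?_ hppos
          apply mul_le_mul_of_nonneg_right habs (Real.exp_nonneg _)

lemma abs_pow_le_abs_rpow (lam : ℝ) (hlam : |lam| ≤ 1) {m : ℕ} {r : ℝ}
    (h : r ≤ (m:ℝ)) (hr : 0 < r) : |lam| ^ m ≤ |lam| ^ r := by
  rcases eq_or_ne lam 0 with rfl | h0
  · have hm : 0 < m := by
      by_contra hm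
      push_neg at hm
      interval_cases m
      · simp at h; linarith
    simp [Real.zero_rpow hr.ne', zero_pow hm.ne']
  · rw [← Real.rpow_natCast |lam| m]
    exact Real.rpow_le_rpow_of_exponent_ge (abs_pos.mpr h0) hlam h

theorem charFun_mod_gaussian_expansion
    {Ω : Type*} [MeasureSpace Ω] (μ : Measure Ω) [IsProbabilityMeasure μ]
    (k : ℕ) (hk : 2 ≤ k) (r : ℝ) (hr : r ∈ Set.Ioo ((k : ℝ) + 1) ((k : ℝ) + 2))
    (X : Ω → ℝ) (hX : MemLp X (ENNReal.ofReal r) μ)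
    (hmom : ∀ j ≤ k, ∫ ω, (X ω) ^ j ∂μ = ∫ x : ℝ, x ^ j ∂(gaussianReal 0 1)) :
    (fun lam : ℝ =>
        (∫ ω, Complex.exp (Complex.I * lam * X ω) ∂μ) * Complex.exp ((lam ^ 2 / 2 : ℝ))
          - 1 - (((∫ ω, (X ω) ^ (k + 1) ∂μ) - ∫ x : ℝ, x ^ (k + 1) ∂(gaussianReal 0 1) : ℝ) : ℂ)
              * (Complex.I * lam) ^ (k + 1) / ((k + 1).factorial : ℂ))
      =O[nhds 0] fun lam : ℝ => |lam| ^ r := by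
  obtain ⟨hrl, hru⟩ := hr
  have hr1 : (k:ℝ) + 1 ≤ r := hrl.le
  have hr2 : r ≤ (k:ℝ) + 2 := hru.le
  have hr0 : 0 < r := lt_of_lt_of_le (by positivity) hr1
  have hXmeas : AEMeasurable X μ := hX.aestronglyMeasurable.aemeasurable
  have hXint : Integrable (fun ω => |X ω| ^ r) μ := by
    have h := hX.integrable_norm_rpow (by simp [ENNReal.ofReal_eq_zero]; linarith)
      ENNReal.ofReal_ne_top
    simpa [ENNReal.toReal_ofReal hr0.le, Real.norm_eq_abs] using h
  have hGint : Integrable (fun x : ℝ => |x| ^ r) (gaussianReal 0 1) :=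
    gaussianReal_integrable_abs_rpow r hr0.le (k+2) (by push_cast; linarith)
  set M1 : ℝ := ∫ ω, |X ω| ^ r ∂μ with hM1
  set M2 : ℝ := ∫ x : ℝ, |x| ^ r ∂(gaussianReal 0 1) with hM2
  have hM1nn : 0 ≤ M1 := integral_nonneg fun ω => Real.rpow_nonneg (abs_nonneg _) r
  have hM2nn : 0 ≤ M2 := integral_nonneg fun x => Real.rpow_nonneg (abs_nonneg _) r
  set c : ℝ := (∫ ω, (X ω) ^ (k + 1) ∂μ) - ∫ x : ℝ, x ^ (k + 1) ∂(gaussianReal 0 1) with hc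
  rw [Asymptotics.isBigO_iff]
  refine ⟨3 * (2 / (k+1).factorial * M1) + 3 * (2 / (k+1).factorial * M2)
    + 3/2 * |c| / (k+1).factorial, ?_⟩
  have hball : Metric.ball (0:ℝ) 1 ∈ nhds (0:ℝ) := Metric.ball_mem_nhds 0 one_pos
  filter_upwards [hball] with lam hlam
  rw [Metric.mem_ball, Real.dist_eq, sub_zero] at hlam
  replace hlam : |lam| ≤ 1 := hlam.le
  have hsq : lam ^ 2 ≤ 1 := by
    rw [← _root_.sq_abs]
    exact pow_le_one₀ (abs_nonneg lam) hlam
  have hsqnn : (0:ℝ) ≤ lam ^ 2 := sq_nonneg lam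
  -- notation
  set A : ℂ := ∫ ω, Complex.exp (Complex.I * lam * X ω) ∂μ with hA
  set G : ℂ := ∫ x : ℝ, Complex.exp (Complex.I * lam * x) ∂(gaussianReal 0 1) with hG
  set Smu : ℂ := ∑ j ∈ Finset.range (k + 2),
    ((∫ ω, (X ω) ^ j ∂μ : ℝ) : ℂ) * (Complex.I * lam) ^ j / j.factorial with hSmu
  set Sga : ℂ := ∑ j ∈ Finset.range (k + 2),
    ((∫ x : ℝ, x ^ j ∂(gaussianReal 0 1) : ℝ) : ℂ) * (Complex.I * lam) ^ j / j.factorial with hSga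
  set e : ℂ := Complex.exp (((lam ^ 2 / 2 : ℝ) : ℂ)) with he
  -- bounds from the key lemma
  have B1 : ‖A - Smu‖ ≤ 2 / (k+1).factorial * M1 * |lam| ^ r :=
    charFun_taylor_bound μ X hXmeas k r hr1 hr2 hXint lam
  have B2 : ‖G - Sga‖ ≤ 2 / (k+1).factorial * M2 * |lam| ^ r :=
    charFun_taylor_bound (gaussianReal 0 1) (fun x => x) aemeasurable_id k r hr1 hr2 hGint lam
  -- the sum difference
  have hSdiff : Smu - Sga = ((c : ℝ) : ℂ) * (Complex.I * lam) ^ (k+1) / (k+1).factorial := by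
    rw [hSmu, hSga, ← Finset.sum_sub_distrib, Finset.sum_range_succ]
    have hz : ∑ j ∈ Finset.range (k + 1),
        (((∫ ω, (X ω) ^ j ∂μ : ℝ) : ℂ) * (Complex.I * lam) ^ j / j.factorial
          - ((∫ x : ℝ, x ^ j ∂(gaussianReal 0 1) : ℝ) : ℂ) * (Complex.I * lam) ^ j / j.factorial)
        = 0 := by
      refine Finset.sum_eq_zero fun j hj => ?_
      rw [hmom j (Nat.lt_succ_iff.mp (Finset.mem_range.mp hj))]
      exact sub_self _
    rw [hz, zero_add, hc]
    push_cast
    ring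
  -- e * G = 1
  have heG : e * G = 1 := by
    rw [he, hG, charFun_gaussianReal_std lam, ← Complex.exp_add,
      show ((lam ^ 2 / 2 : ℝ) : ℂ) + (-((lam:ℂ)) ^ 2 / 2) = 0 by push_cast; ring,
      Complex.exp_zero]
  -- main identity
  have hident : A * e - 1 - ((c:ℝ):ℂ) * (Complex.I * lam) ^ (k+1) / ((k+1).factorial : ℂ)
      = e * (A - Smu) - e * (G - Sga)
        + ((c:ℝ):ℂ) * (Complex.I * lam) ^ (k+1) / ((k+1).factorial : ℂ) * (e - 1) := by
    linear_combination e * hSdiff + heG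
  -- norm bounds
  have hnorme : ‖e‖ ≤ 3 := by
    rw [he, Complex.norm_exp]
    have : ((lam ^ 2 / 2 : ℝ) : ℂ).re = lam ^ 2 / 2 := Complex.ofReal_re _
    rw [this]
    calc Real.exp (lam ^ 2 / 2) ≤ Real.exp 1 := Real.exp_le_exp.mpr (by linarith)
      _ ≤ 3 := by linarith [Real.exp_one_lt_d9]
  have hnorme1 : ‖e - 1‖ ≤ 3/2 * lam ^ 2 := by
    have hee : e = ((Real.exp (lam ^ 2 / 2) : ℝ) : ℂ) := by
      rw [he, Complex.ofReal_exp]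
    rw [hee, show ((Real.exp (lam ^ 2 / 2) : ℝ) : ℂ) - 1
      = ((Real.exp (lam ^ 2 / 2) - 1 : ℝ) : ℂ) by push_cast; ring, Complex.norm_real]
    have hu : (0:ℝ) ≤ lam ^ 2 / 2 := by linarith
    have hge : (1:ℝ) ≤ Real.exp (lam ^ 2 / 2) := Real.one_le_exp hu
    rw [Real.norm_eq_abs, _root_.abs_of_nonneg (by linarith)]
    have hb := Real.add_one_le_exp (-(lam ^ 2 / 2))
    rw [Real.exp_neg] at hb
    have hpos := Real.exp_pos (lam ^ 2 / 2)
    have hle3 : Real.exp (lam ^ 2 / 2) ≤ 3 := by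
      calc Real.exp (lam ^ 2 / 2) ≤ Real.exp 1 := Real.exp_le_exp.mpr (by linarith)
        _ ≤ 3 := by linarith [Real.exp_one_lt_d9]
    nlinarith [hb, hpos, hle3, mul_inv_cancel₀ (ne_of_gt hpos), hsqnn]
  have hnormT : ‖((c:ℝ):ℂ) * (Complex.I * lam) ^ (k+1) / ((k+1).factorial : ℂ)‖
      = |c| * |lam| ^ (k+1) / (k+1).factorial := by
    rw [norm_div, norm_mul, norm_pow, norm_mul, Complex.norm_I, one_mul, Complex.norm_real,
      Complex.norm_natCast, Real.norm_eq_abs, Complex.norm_real, Real.norm_eq_abs]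
  have hrpow_nn : (0:ℝ) ≤ |lam| ^ r := Real.rpow_nonneg (abs_nonneg lam) r
  have hpow13 : |lam| ^ (k+1) * lam ^ 2 = |lam| ^ (k+3) := by
    rw [← _root_.sq_abs]
    ring
  have hpowr : |lam| ^ (k+3) ≤ |lam| ^ r :=
    abs_pow_le_abs_rpow lam hlam (by push_cast; linarith) hr0
  -- putting it together
  rw [Real.norm_eq_abs, _root_.abs_of_nonneg hrpow_nn]
  calc ‖A * e - 1 - ((c:ℝ):ℂ) * (Complex.I * lam) ^ (k+1) / ((k+1).factorial : ℂ)‖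
      = ‖e * (A - Smu) - e * (G - Sga)
          + ((c:ℝ):ℂ) * (Complex.I * lam) ^ (k+1) / ((k+1).factorial : ℂ) * (e - 1)‖ := by
        rw [hident]
    _ ≤ ‖e * (A - Smu) - e * (G - Sga)‖
          + ‖((c:ℝ):ℂ) * (Complex.I * lam) ^ (k+1) / ((k+1).factorial : ℂ) * (e - 1)‖ :=
        norm_add_le _ _
    _ ≤ ‖e * (A - Smu)‖ + ‖e * (G - Sga)‖
          + ‖((c:ℝ):ℂ) * (Complex.I * lam) ^ (k+1) / ((k+1).factorial : ℂ)‖ * ‖e - 1‖ := by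
        rw [norm_mul]
        exact add_le_add_left (norm_sub_le _ _) _
    _ ≤ 3 * (2 / (k+1).factorial * M1 * |lam| ^ r)
          + 3 * (2 / (k+1).factorial * M2 * |lam| ^ r)
          + (|c| * |lam| ^ (k+1) / (k+1).factorial) * (3/2 * lam ^ 2) := by
        gcongr ?_ + ?_ + ?_
        · rw [norm_mul]
          exact mul_le_mul hnorme B1 (norm_nonneg _) (by norm_num)
        · rw [norm_mul]
          exact mul_le_mul hnorme B2 (norm_nonneg _) (by norm_num)
        · rw [hnormT]
          exact mul_le_mul_of_nonneg_left hnorme1 (by positivity)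
    _ ≤ (3 * (2 / (k+1).factorial * M1) + 3 * (2 / (k+1).factorial * M2)
          + 3/2 * |c| / (k+1).factorial) * |lam| ^ r := by
        have h3 : (|c| * |lam| ^ (k+1) / (k+1).factorial) * (3/2 * lam ^ 2)
            = 3/2 * |c| / (k+1).factorial * (|lam| ^ (k+1) * lam ^ 2) := by ring
        rw [h3, hpow13]
        have h4 : 3/2 * |c| / (k+1).factorial * |lam| ^ (k+3)
            ≤ 3/2 * |c| / (k+1).factorial * |lam| ^ r :=
          mul_le_mul_of_nonneg_left hpowr (by positivity)
        ring_nf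
        ring_nf at h4 ⊢
        nlinarith [h4, hrpow_nn, hM1nn, hM2nn]
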